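/- Let X be a real random variable, φ : ℝ → ℝ a nonincreasing measurable function with φ(X) having the same distribution as X, and f : ℝ → ℝ monotone with f(X) ∈ L²(ℙ) and ℙ(f(X) ≠ E[f(X)]) > 0. Then Var((f(X) + f(φ(X)))/2) < Var(f(X))/2. -/

import Mathlib

open MeasureTheory ProbabilityTheory

private lemma exists_threshold {Ω : Type*} [MeasurableSpace Ω] (P : Measure Ω)
    [IsProbabilityMeasure P] {W : Ω → ℝ} (hW : Integrable W P)
    (hnd : 0 < P {ω | W ω ≠ ∫ ω', W ω' ∂P}) :
    ∃ t, 0 < P {ω | W ω ≤ t} ∧ 0 < P {ω | t < W ω} := by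
  set m := ∫ ω', W ω' ∂P with hm
  have hsplit : {ω | W ω ≠ m} = {ω | W ω < m} ∪ {ω | m < W ω} := by
    ext ω
    simp only [Set.mem_setOf_eq, Set.mem_union]
    exact ne_iff_lt_or_gt
  rw [hsplit] at hnd
  have hcase : 0 < P {ω | W ω < m} ∨ 0 < P {ω | m < W ω} := by
    by_contra h
    push_neg at h
    have h1 : P {ω | W ω < m} = 0 := le_antisymm h.1 zero_le
    have h2 : P {ω | m < W ω} = 0 := le_antisymm h.2 zero_le
    rw [measure_union_null h1 h2] at hnd
    exact lt_irrefl 0 hnd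
  rcases hcase with hlt | hgt
  · have hunion : {ω | W ω < m} = ⋃ n : ℕ, {ω | W ω ≤ m - 1 / (n + 1)} := by
      ext ω
      simp only [Set.mem_setOf_eq, Set.mem_iUnion]
      constructor
      · intro hw
        obtain ⟨n, hn⟩ := exists_nat_one_div_lt (sub_pos.2 hw)
        exact ⟨n, by push_cast at hn ⊢; linarith⟩
      · rintro ⟨n, hn⟩
        have : (0:ℝ) < 1 / (n + 1) := by positivity
        linarith
    rw [hunion] at hlt
    have hex : ∃ n : ℕ, 0 < P {ω | W ω ≤ m - 1 / (n + 1)} := by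
      by_contra h
      push_neg at h
      have : P (⋃ n : ℕ, {ω | W ω ≤ m - 1 / (n + 1)}) = 0 :=
        measure_iUnion_null fun n => le_antisymm (h n) zero_le
      rw [this] at hlt; exact lt_irrefl 0 hlt
    obtain ⟨n, hn⟩ := hex
    set t := m - 1 / (n + 1 : ℝ) with ht
    have htm : t < m := by
      have : (0:ℝ) < 1 / (n + 1) := by positivity
      simp only [ht]; linarith
    refine ⟨t, hn, ?_⟩
    by_contra h
    push_neg at h
    have h0 : P {ω | t < W ω} = 0 := le_antisymm h zero_le
    have hae : ∀ᵐ ω ∂P, W ω ≤ t := by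
      rw [ae_iff]
      simpa only [not_le] using h0
    have : m ≤ t := by
      calc m = ∫ ω, W ω ∂P := hm
        _ ≤ ∫ _, t ∂P := integral_mono_ae hW (integrable_const t) hae
        _ = t := by simp
    linarith
  · have hunion : {ω | m < W ω} = ⋃ n : ℕ, {ω | m + 1 / (n + 1) ≤ W ω} := by
      ext ω
      simp only [Set.mem_setOf_eq, Set.mem_iUnion]
      constructor
      · intro hw
        obtain ⟨n, hn⟩ := exists_nat_one_div_lt (sub_pos.2 hw)
        exact ⟨n, by push_cast at hn ⊢; linarith⟩
      · rintro ⟨n, hn⟩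
        have : (0:ℝ) < 1 / (n + 1) := by positivity
        linarith
    rw [hunion] at hgt
    have hex : ∃ n : ℕ, 0 < P {ω | m + 1 / (n + 1) ≤ W ω} := by
      by_contra h
      push_neg at h
      have : P (⋃ n : ℕ, {ω | m + 1 / (n + 1) ≤ W ω}) = 0 :=
        measure_iUnion_null fun n => le_antisymm (h n) zero_le
      rw [this] at hgt; exact lt_irrefl 0 hgt
    obtain ⟨n, hn⟩ := hex
    set t := m + 1 / (n + 2 : ℝ) with ht
    have htm : m < t := by
      have : (0:ℝ) < 1 / (n + 2) := by positivity
      simp only [ht]; linarith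
    have hsub : {ω | m + 1 / (n + 1 : ℝ) ≤ W ω} ⊆ {ω | t < W ω} := by
      intro ω hω
      simp only [Set.mem_setOf_eq] at hω ⊢
      have h12 : 1 / ((n:ℝ) + 2) < 1 / ((n:ℝ) + 1) := by
        apply one_div_lt_one_div_of_lt <;> [positivity; linarith]
      simp only [ht]; linarith
    refine ⟨t, ?_, lt_of_lt_of_le hn (measure_mono hsub)⟩
    by_contra h
    push_neg at h
    have h0 : P {ω | W ω ≤ t} = 0 := le_antisymm h zero_le
    have hae : ∀ᵐ ω ∂P, t ≤ W ω := by
      rw [ae_iff]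
      refine measure_mono_null ?_ h0
      intro ω hω
      simp only [Set.mem_setOf_eq, not_le] at hω ⊢
      exact le_of_lt hω
    have : t ≤ m := by
      calc t = ∫ _, t ∂P := by simp
        _ ≤ ∫ ω, W ω ∂P := integral_mono_ae (integrable_const t) hW hae
        _ = m := hm.symm
    linarith


private lemma cov_neg_of_monotone_antitone {Ω : Type*} [MeasurableSpace Ω] (P : Measure Ω)
    [IsProbabilityMeasure P] (X : Ω → ℝ) (hX : Measurable X)
    (g h : ℝ → ℝ) (hgm : Measurable g) (hhm : Measurable h)
    (hg : Monotone g) (hh : Antitone h)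
    (hg2 : MemLp (fun ω => g (X ω)) 2 P) (hh2 : MemLp (fun ω => h (X ω)) 2 P)
    (t u : ℝ)
    (hgt : 0 < P {ω | g (X ω) ≤ t}) (hgt' : 0 < P {ω | t < g (X ω)})
    (hu : 0 < P {ω | h (X ω) ≤ u}) (hu' : 0 < P {ω | u < h (X ω)}) :
    ∫ ω, g (X ω) * h (X ω) ∂P < (∫ ω, g (X ω) ∂P) * ∫ ω, h (X ω) ∂P := by
  set Y : Ω → ℝ := fun ω => g (X ω) with hYdef
  set Z : Ω → ℝ := fun ω => h (X ω) with hZdef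
  have hY1 : Integrable Y P := hg2.integrable one_le_two
  have hZ1 : Integrable Z P := hh2.integrable one_le_two
  have hYZ : Integrable (fun ω => Y ω * Z ω) P := by
    have hsm : MemLp (Y • Z) 1 P := hh2.smul hg2
    have h2 : Integrable (Y • Z) P := hsm.integrable le_rfl
    exact h2
  set F : Ω × Ω → ℝ := fun p => (Y p.1 - Y p.2) * (Z p.1 - Z p.2) with hFdef
  have hFnonpos : ∀ p, F p ≤ 0 := by
    intro p
    rcases le_total (X p.1) (X p.2) with hle | hle
    · exact mul_nonpos_of_nonpos_of_nonneg (sub_nonpos.2 (hg hle)) (sub_nonneg.2 (hh hle))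
    · exact mul_nonpos_of_nonneg_of_nonpos (sub_nonneg.2 (hg hle)) (sub_nonpos.2 (hh hle))
  have h1 : Integrable (fun p : Ω × Ω => Y p.1 * Z p.1) (P.prod P) := by
    have := hYZ.mul_prod (integrable_const (1:ℝ) (μ := P))
    simpa using this
  have h2 : Integrable (fun p : Ω × Ω => Y p.1 * Z p.2) (P.prod P) := hY1.mul_prod hZ1
  have h3 : Integrable (fun p : Ω × Ω => Y p.2 * Z p.1) (P.prod P) := by
    have := hZ1.mul_prod hY1
    simpa [mul_comm] using this
  have h4 : Integrable (fun p : Ω × Ω => Y p.2 * Z p.2) (P.prod P) := by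
    have := (integrable_const (1:ℝ) (μ := P)).mul_prod hYZ
    simpa using this
  have hFeq : F = fun p : Ω × Ω =>
      (Y p.1 * Z p.1 - Y p.1 * Z p.2) - (Y p.2 * Z p.1 - Y p.2 * Z p.2) := by
    funext p; simp only [hFdef]; ring
  have h12 : Integrable (fun p : Ω × Ω => Y p.1 * Z p.1 - Y p.1 * Z p.2) (P.prod P) :=
    h1.sub h2
  have h34 : Integrable (fun p : Ω × Ω => Y p.2 * Z p.1 - Y p.2 * Z p.2) (P.prod P) :=
    h3.sub h4
  have hFint : Integrable F (P.prod P) := by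
    rw [hFeq]; exact h12.sub h34
  have hint1 : ∫ p : Ω × Ω, Y p.1 * Z p.1 ∂(P.prod P) = ∫ ω, Y ω * Z ω ∂P := by
    have := integral_prod_mul (μ := P) (ν := P) (fun ω => Y ω * Z ω) (fun _ => (1:ℝ))
    simpa using this
  have hint2 : ∫ p : Ω × Ω, Y p.1 * Z p.2 ∂(P.prod P) = (∫ ω, Y ω ∂P) * ∫ ω, Z ω ∂P :=
    integral_prod_mul (μ := P) (ν := P) Y Z
  have hint3 : ∫ p : Ω × Ω, Y p.2 * Z p.1 ∂(P.prod P) = (∫ ω, Y ω ∂P) * ∫ ω, Z ω ∂P := by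
    have := integral_prod_mul (μ := P) (ν := P) Z Y
    calc ∫ p : Ω × Ω, Y p.2 * Z p.1 ∂(P.prod P)
        = ∫ p : Ω × Ω, Z p.1 * Y p.2 ∂(P.prod P) := by
          congr 1; funext p; ring
      _ = (∫ ω, Z ω ∂P) * ∫ ω, Y ω ∂P := this
      _ = (∫ ω, Y ω ∂P) * ∫ ω, Z ω ∂P := by ring
  have hint4 : ∫ p : Ω × Ω, Y p.2 * Z p.2 ∂(P.prod P) = ∫ ω, Y ω * Z ω ∂P := by
    have := integral_prod_mul (μ := P) (ν := P) (fun _ => (1:ℝ)) (fun ω => Y ω * Z ω)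
    simpa using this
  have hIF : ∫ p, F p ∂(P.prod P)
      = 2 * (∫ ω, Y ω * Z ω ∂P) - 2 * ((∫ ω, Y ω ∂P) * ∫ ω, Z ω ∂P) := by
    calc ∫ p, F p ∂(P.prod P)
        = ∫ p : Ω × Ω, ((Y p.1 * Z p.1 - Y p.1 * Z p.2)
            - (Y p.2 * Z p.1 - Y p.2 * Z p.2)) ∂(P.prod P) := by rw [hFeq]
      _ = (∫ p : Ω × Ω, (Y p.1 * Z p.1 - Y p.1 * Z p.2) ∂(P.prod P))
            - ∫ p : Ω × Ω, (Y p.2 * Z p.1 - Y p.2 * Z p.2) ∂(P.prod P) :=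
          integral_sub h12 h34
      _ = ((∫ p : Ω × Ω, Y p.1 * Z p.1 ∂(P.prod P))
            - ∫ p : Ω × Ω, Y p.1 * Z p.2 ∂(P.prod P))
            - ((∫ p : Ω × Ω, Y p.2 * Z p.1 ∂(P.prod P))
            - ∫ p : Ω × Ω, Y p.2 * Z p.2 ∂(P.prod P)) := by
          rw [integral_sub h1 h2, integral_sub h3 h4]
      _ = 2 * (∫ ω, Y ω * Z ω ∂P) - 2 * ((∫ ω, Y ω ∂P) * ∫ ω, Z ω ∂P) := by
          rw [hint1, hint2, hint3, hint4]; ring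
  -- strict negativity of the integral of F
  have hkey : ∫ p, F p ∂(P.prod P) < 0 := by
    have hGnonneg : 0 ≤ fun p => -F p := fun p => neg_nonneg.2 (hFnonpos p)
    have hGint : Integrable (fun p => -F p) (P.prod P) := hFint.neg
    have hsupp : 0 < (P.prod P) (Function.support fun p => -F p) := by
      -- rays on ℝ
      set A : Set ℝ := {x | g x ≤ t} with hA
      set B : Set ℝ := {x | u < h x} with hB
      have hAdown : ∀ x y, x ≤ y → y ∈ A → x ∈ A := fun x y hxy hy =>
        le_trans (hg hxy) hy
      have hBdown : ∀ x y, x ≤ y → y ∈ B → x ∈ B := fun x y hxy hy =>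
        lt_of_lt_of_le hy (hh hxy)
      have hFneg : ∀ p : Ω × Ω, X p.1 ∈ A ∩ B → (X p.2 ∉ A ∧ X p.2 ∉ B) → F p < 0 := by
        rintro p ⟨hp1A, hp1B⟩ ⟨hp2A, hp2B⟩
        simp only [hA, hB, Set.mem_setOf_eq, not_lt, not_le] at hp1A hp1B hp2A hp2B
        apply mul_neg_of_neg_of_pos
        · simp only [hYdef]; linarith
        · simp only [hZdef]; linarith
      rcases (em (A ⊆ B)) with hAB | hAB
      · -- use {Y ≤ t} ×ˢ {Z ≤ u}
        have hsub : {ω | Y ω ≤ t} ×ˢ {ω | Z ω ≤ u} ⊆ Function.support fun p => -F p := by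
          rintro ⟨ω1, ω2⟩ ⟨hω1, hω2⟩
          simp only [Set.mem_setOf_eq] at hω1 hω2
          have hx1 : X ω1 ∈ A ∩ B := ⟨hω1, hAB hω1⟩
          have hx2B : X ω2 ∉ B := by simp only [hB, Set.mem_setOf_eq, not_lt]; exact hω2
          have hx2A : X ω2 ∉ A := fun hx => hx2B (hAB hx)
          have := hFneg (ω1, ω2) hx1 ⟨hx2A, hx2B⟩
          simp only [Function.mem_support]
          intro hc
          rw [neg_eq_zero] at hc
          exact absurd hc (ne_of_lt this)
        calc (0:ENNReal) < P {ω | Y ω ≤ t} * P {ω | Z ω ≤ u} :=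
              ENNReal.mul_pos (ne_of_gt hgt) (ne_of_gt hu)
          _ = (P.prod P) ({ω | Y ω ≤ t} ×ˢ {ω | Z ω ≤ u}) := (Measure.prod_prod _ _).symm
          _ ≤ (P.prod P) (Function.support fun p => -F p) := measure_mono hsub
      · -- then B ⊆ A; use {u < Z} ×ˢ {t < Y}
        have hBA : B ⊆ A := by
          obtain ⟨a, haA, haB⟩ := Set.not_subset.1 hAB
          intro b hb
          rcases le_total b a with hba | hab
          · exact hAdown b a hba haA
          · exact absurd (hBdown a b hab hb) haB
        have hsub : {ω | u < Z ω} ×ˢ {ω | t < Y ω} ⊆ Function.support fun p => -F p := by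
          rintro ⟨ω1, ω2⟩ ⟨hω1, hω2⟩
          simp only [Set.mem_setOf_eq] at hω1 hω2
          have hx1 : X ω1 ∈ A ∩ B := ⟨hBA hω1, hω1⟩
          have hx2A : X ω2 ∉ A := by simp only [hA, Set.mem_setOf_eq, not_le]; exact hω2
          have hx2B : X ω2 ∉ B := fun hx => hx2A (hBA hx)
          have := hFneg (ω1, ω2) hx1 ⟨hx2A, hx2B⟩
          simp only [Function.mem_support]
          intro hc
          rw [neg_eq_zero] at hc
          exact absurd hc (ne_of_lt this)
        calc (0:ENNReal) < P {ω | u < Z ω} * P {ω | t < Y ω} :=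
              ENNReal.mul_pos (ne_of_gt hu') (ne_of_gt hgt')
          _ = (P.prod P) ({ω | u < Z ω} ×ˢ {ω | t < Y ω}) := (Measure.prod_prod _ _).symm
          _ ≤ (P.prod P) (Function.support fun p => -F p) := measure_mono hsub
    have hpos : 0 < ∫ p, -F p ∂(P.prod P) := by
      rw [integral_pos_iff_support_of_nonneg hGnonneg hGint]
      exact hsupp
    rw [integral_neg] at hpos
    linarith
  rw [hIF] at hkey
  linarith

theorem antithetic_variance_reduction
    {Ω : Type*} [MeasurableSpace Ω] (P : Measure Ω) [IsProbabilityMeasure P]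
    (X : Ω → ℝ) (hX : Measurable X)
    (φ : ℝ → ℝ) (hφm : Measurable φ) (hφ : Antitone φ)
    (hlaw : Measure.map (fun ω => φ (X ω)) P = Measure.map X P)
    (f : ℝ → ℝ) (hfm : Measurable f) (hf : Monotone f ∨ Antitone f)
    (hL2 : MemLp (fun ω => f (X ω)) 2 P)
    (hnd : 0 < P {ω | f (X ω) ≠ ∫ ω', f (X ω') ∂P}) :
    variance (fun ω => (f (X ω) + f (φ (X ω))) / 2) P
      < variance (fun ω => f (X ω)) P / 2 := by
  set Y : Ω → ℝ := fun ω => f (X ω) with hYdef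
  set W : Ω → ℝ := fun ω => f (φ (X ω)) with hWdef
  set m : ℝ := ∫ ω', f (X ω') ∂P with hmdef
  have hXφm : Measurable fun ω => φ (X ω) := hφm.comp hX
  -- W is in L², and has the same moments as Y
  have hmapY : MemLp f 2 (Measure.map X P) :=
    (memLp_map_measure_iff hfm.aestronglyMeasurable hX.aemeasurable).2 hL2
  have hW2 : MemLp W 2 P := by
    rw [← hlaw] at hmapY
    exact (memLp_map_measure_iff hfm.aestronglyMeasurable hXφm.aemeasurable).1 hmapY
  have htransfer : ∀ G : ℝ → ℝ, Measurable G →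
      ∫ ω, G (φ (X ω)) ∂P = ∫ ω, G (X ω) ∂P := by
    intro G hG
    rw [← integral_map hXφm.aemeasurable hG.aestronglyMeasurable, hlaw,
      integral_map hX.aemeasurable hG.aestronglyMeasurable]
  have hEW : ∫ ω, W ω ∂P = m := htransfer f hfm
  have hEW2 : ∫ ω, W ω ^ 2 ∂P = ∫ ω, Y ω ^ 2 ∂P :=
    htransfer (fun x => f x ^ 2) (hfm.pow_const 2)
  have hndW : 0 < P {ω | W ω ≠ m} := by
    have hset : MeasurableSet {x : ℝ | f x ≠ m} :=
      (hfm (measurableSet_singleton m)).compl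
    have e1 : P {ω | W ω ≠ m} = (Measure.map (fun ω => φ (X ω)) P) {x | f x ≠ m} := by
      rw [Measure.map_apply hXφm hset]; rfl
    have e2 : P {ω | Y ω ≠ m} = (Measure.map X P) {x | f x ≠ m} := by
      rw [Measure.map_apply hX hset]; rfl
    rw [e1, hlaw, ← e2]
    exact hnd
  have hY1 : Integrable Y P := hL2.integrable one_le_two
  have hW1 : Integrable W P := hW2.integrable one_le_two
  have hEY : ∫ ω, Y ω ∂P = m := by rw [hmdef]
  -- covariance is negative
  have hcov : ∫ ω, Y ω * W ω ∂P < m * m := by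
    obtain ⟨t, ht1, ht2⟩ := exists_threshold P hY1 hnd
    obtain ⟨u, hu1, hu2⟩ := exists_threshold P hW1 (by rw [hEW]; exact hndW)
    rcases hf with hmono | hanti
    · have hhanti : Antitone (f ∘ φ) := fun x y hxy => hmono (hφ hxy)
      have := cov_neg_of_monotone_antitone P X hX f (f ∘ φ) hfm (hfm.comp hφm)
        hmono hhanti hL2 hW2 t u ht1 ht2 hu1 hu2
      calc ∫ ω, Y ω * W ω ∂P < (∫ ω, Y ω ∂P) * ∫ ω, W ω ∂P := this
        _ = m * m := by rw [hEW, hEY]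
    · have hgmono : Monotone (f ∘ φ) := fun x y hxy => hanti (hφ hxy)
      have := cov_neg_of_monotone_antitone P X hX (f ∘ φ) f (hfm.comp hφm) hfm
        hgmono hanti hW2 hL2 u t hu1 hu2 ht1 ht2
      calc ∫ ω, Y ω * W ω ∂P = ∫ ω, W ω * Y ω ∂P := by
            congr 1; funext ω; ring
        _ < (∫ ω, W ω ∂P) * ∫ ω, Y ω ∂P := this
        _ = m * m := by rw [hEW, hEY]
  -- integrability of the product
  have hYW : Integrable (fun ω => Y ω * W ω) P := by
    have hsm : MemLp (Y • W) 1 P := hW2.smul hL2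
    have h2 : Integrable (Y • W) P := hsm.integrable le_rfl
    exact h2
  -- variance computations
  have hV2 : MemLp (fun ω => (Y ω + W ω) / 2) 2 P := by
    have := (hL2.add hW2).const_mul (2⁻¹ : ℝ)
    simpa [div_eq_inv_mul] using this
  have hvarY : variance (fun ω => f (X ω)) P = (∫ ω, Y ω ^ 2 ∂P) - m ^ 2 := by
    rw [variance_eq_sub hL2]
    rfl
  have hvarV : variance (fun ω => (f (X ω) + f (φ (X ω))) / 2) P
      = (∫ ω, ((Y ω + W ω) / 2) ^ 2 ∂P) - ((∫ ω, (Y ω + W ω) / 2 ∂P)) ^ 2 := by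
    rw [variance_eq_sub hV2]
    rfl
  have hmean : ∫ ω, (Y ω + W ω) / 2 ∂P = m := by
    have : (fun ω => (Y ω + W ω) / 2) = fun ω => (2⁻¹ : ℝ) * (Y ω + W ω) := by
      funext ω; ring
    rw [this, integral_const_mul, integral_add hY1 hW1, hEW]
    simp only [hmdef]
    ring
  have hsq : ∫ ω, ((Y ω + W ω) / 2) ^ 2 ∂P
      = ((∫ ω, Y ω ^ 2 ∂P) + 2 * (∫ ω, Y ω * W ω ∂P) + ∫ ω, W ω ^ 2 ∂P) / 4 := by
    have heq : (fun ω => ((Y ω + W ω) / 2) ^ 2)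
        = fun ω => (4⁻¹ : ℝ) * (Y ω ^ 2 + (2 * (Y ω * W ω) + W ω ^ 2)) := by
      funext ω; ring
    have ha : Integrable (fun ω => 2 * (Y ω * W ω)) P := hYW.const_mul 2
    have hb : Integrable (fun ω => W ω ^ 2) P := hW2.integrable_sq
    have hab : Integrable (fun ω => 2 * (Y ω * W ω) + W ω ^ 2) P := ha.add hb
    rw [heq, integral_const_mul, integral_add hL2.integrable_sq hab,
      integral_add ha hb, integral_const_mul]
    ring
  rw [hvarV, hvarY, hmean, hsq, hEW2]
  have hm2 : m * m = m ^ 2 := by ring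
  nlinarith [hcov]
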